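/- arXiv:2310.00812 — 2 statements merged into one kernel-verified Lean document; each statement's English description precedes it below -/
import Mathlib

section
/- For all real u with 0 < u < 1 and all real ε with 0 < ε < 1, one has 0 ≤ (u^{1-ε} - u)/ε - u·log(1/u) ≤ ε. -/
open Real Set

private lemma auxA {ε : ℝ} (he0 : 0 < ε) (he1 : ε ≤ 1) :
    ∀ x : ℝ, 0 ≤ x → Real.exp x - 1 ≤ ε * (Real.exp (x / ε) - 1) := by
  intro x hx
  set f : ℝ → ℝ := fun y => ε * (Real.exp (y / ε) - 1) - (Real.exp y - 1) with hf
  have hderiv : ∀ y : ℝ, HasDerivAt f (Real.exp (y / ε) - Real.exp y) y := by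
    intro y
    have h1 : HasDerivAt (fun z : ℝ => z / ε) (1 / ε) y := (hasDerivAt_id y).div_const ε
    have h2 : HasDerivAt (fun z : ℝ => Real.exp (z / ε)) (Real.exp (y / ε) * (1 / ε)) y :=
      h1.exp
    have h3 : HasDerivAt (fun z : ℝ => ε * (Real.exp (z / ε) - 1))
        (ε * (Real.exp (y / ε) * (1 / ε))) y := ((h2.sub_const 1).const_mul ε)
    have h4 := h3.sub ((Real.hasDerivAt_exp y).sub_const 1)
    have : ε * (Real.exp (y / ε) * (1 / ε)) - Real.exp y = Real.exp (y / ε) - Real.exp y := by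
      field_simp
    rw [this] at h4
    exact h4
  have hmono : MonotoneOn f (Ici (0 : ℝ)) := by
    apply monotoneOn_of_deriv_nonneg (convex_Ici 0)
    · exact fun y _ => ((hderiv y).continuousAt).continuousWithinAt
    · exact fun y _ => ((hderiv y).differentiableAt).differentiableWithinAt
    · intro y hy
      rw [(hderiv y).deriv]
      have hy0 : 0 < y := by simpa using hy
      have : y ≤ y / ε := by
        rw [le_div_iff₀ he0]
        nlinarith
      have := Real.exp_le_exp.mpr this
      linarith
  have h0 : f 0 ≤ f x := hmono (by simp) (by simpa using hx) hx
  simp only [hf] at h0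
  simp at h0
  linarith [h0]

private lemma auxB {ε : ℝ} (he0 : 0 < ε) (he1 : ε ≤ 1) :
    ∀ t : ℝ, 0 ≤ t → Real.exp t - 1 - t ≤ ε ^ 2 * (Real.exp (t / ε) - 1 - t / ε) := by
  intro t ht
  set g : ℝ → ℝ := fun y => ε ^ 2 * (Real.exp (y / ε) - 1 - y / ε) - (Real.exp y - 1 - y)
    with hg
  have hderiv : ∀ y : ℝ,
      HasDerivAt g (ε * (Real.exp (y / ε) - 1) - (Real.exp y - 1)) y := by
    intro y
    have h1 : HasDerivAt (fun z : ℝ => z / ε) (1 / ε) y := (hasDerivAt_id y).div_const ε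
    have h2 : HasDerivAt (fun z : ℝ => Real.exp (z / ε)) (Real.exp (y / ε) * (1 / ε)) y :=
      h1.exp
    have h3 : HasDerivAt (fun z : ℝ => Real.exp (z / ε) - 1 - z / ε)
        (Real.exp (y / ε) * (1 / ε) - 1 / ε) y := (h2.sub_const 1).sub h1
    have h4 : HasDerivAt (fun z : ℝ => ε ^ 2 * (Real.exp (z / ε) - 1 - z / ε))
        (ε ^ 2 * (Real.exp (y / ε) * (1 / ε) - 1 / ε)) y := h3.const_mul (ε ^ 2)
    have h5 : HasDerivAt (fun z : ℝ => Real.exp z - 1 - z) (Real.exp y - 1) y := by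
      have := ((Real.hasDerivAt_exp y).sub_const 1).sub (hasDerivAt_id' y)
      exact this
    have h6 := h4.sub h5
    have : ε ^ 2 * (Real.exp (y / ε) * (1 / ε) - 1 / ε) - (Real.exp y - 1)
        = ε * (Real.exp (y / ε) - 1) - (Real.exp y - 1) := by
      field_simp
    rw [this] at h6
    exact h6
  have hmono : MonotoneOn g (Ici (0 : ℝ)) := by
    apply monotoneOn_of_deriv_nonneg (convex_Ici 0)
    · exact fun y _ => ((hderiv y).continuousAt).continuousWithinAt
    · exact fun y _ => ((hderiv y).differentiableAt).differentiableWithinAt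
    · intro y hy
      rw [(hderiv y).deriv]
      have hy0 : 0 < y := by simpa using hy
      have := auxA he0 he1 y hy0.le
      linarith
  have h0 : g 0 ≤ g t := hmono (by simp) (by simpa using ht) ht
  simp only [hg] at h0
  simp at h0
  linarith [h0]

theorem stmt1 (u ε : ℝ) (hu0 : 0 < u) (hu1 : u < 1) (he0 : 0 < ε) (he1 : ε < 1) :
    0 ≤ (u ^ (1 - ε) - u) / ε - u * Real.log (1 / u) ∧
    (u ^ (1 - ε) - u) / ε - u * Real.log (1 / u) ≤ ε := by
  set L : ℝ := -Real.log u with hLdef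
  have hL : 0 < L := by
    have := Real.log_neg hu0 hu1
    simp [hLdef]; linarith
  have hlog1u : Real.log (1 / u) = L := by
    rw [one_div, Real.log_inv]
  have hrpow : u ^ (1 - ε) = u * Real.exp (ε * L) := by
    rw [Real.rpow_def_of_pos hu0]
    have : Real.log u * (1 - ε) = Real.log u + ε * L := by
      simp [hLdef]; ring
    rw [this, Real.exp_add, Real.exp_log hu0]
  have hεL : 0 ≤ ε * L := by positivity
  constructor
  · rw [hrpow, hlog1u]
    have h1 : ε * L + 1 ≤ Real.exp (ε * L) := Real.add_one_le_exp (ε * L)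
    have key : 0 ≤ u * Real.exp (ε * L) - u - ε * (u * L) := by nlinarith
    rw [le_sub_iff_add_le, zero_add, le_div_iff₀ he0]
    nlinarith
  · rw [hrpow, hlog1u]
    have hB := auxB he0 he1.le (ε * L) hεL
    have hdiv : ε * L / ε = L := by field_simp
    rw [hdiv] at hB
    have hexpL : u * Real.exp L = 1 := by
      simp [hLdef, Real.exp_neg, Real.exp_log hu0]
      field_simp
    -- u * (exp(εL) - 1 - εL) ≤ u * ε² * (exp L - 1 - L) ≤ ε² * u * exp L = ε²
    have key : u * Real.exp (ε * L) - u - ε * (u * L) ≤ ε ^ 2 := by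
      have h1 : u * (Real.exp (ε * L) - 1 - ε * L) ≤ u * (ε ^ 2 * (Real.exp L - 1 - L)) :=
        mul_le_mul_of_nonneg_left hB hu0.le
      have h2 : ε ^ 2 * (u * (Real.exp L - 1 - L)) ≤ ε ^ 2 * (u * Real.exp L) := by
        apply mul_le_mul_of_nonneg_left _ (by positivity)
        nlinarith
      nlinarith [hexpL]
    rw [sub_le_iff_le_add, div_le_iff₀ he0]
    nlinarith
end

section
/- Define, for q ∈ [0,1], α₁(q) = −(1/4)(1/4)^q + (1/4)(3/4)^q + 1/8, α₂(q) = (1/4)(1/2)^q − 1/8, α₃(q) = (1/4)(1/4)^q − (1/4)(3/4)^q + 1/8, and α₄(q) = (1/2)(1/4)^q − (3/4)(1/2)^q + (1/2)(3/4)^q − 1/8. Then αₗ(q) ≥ 0 for all q ∈ [0,1] and all ℓ ∈ {1,2,3,4}, and αₗ(q) > 0 for all q ∈ [0,1) and all ℓ ∈ {1,2,3,4}. -/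
open Real

private lemma log3_gt_one : 1 < Real.log 3 := by
  rw [Real.lt_log_iff_exp_lt (by norm_num)]
  calc Real.exp 1 < 2.7182818286 := Real.exp_one_lt_d9
    _ < 3 := by norm_num

private lemma log3_lt : Real.log 3 < 9/8 := by
  have h1 : (6561:ℝ) < Real.exp 9 := by
    have h2 : ((2.7:ℝ))^(9:ℕ) ≤ (Real.exp 1)^(9:ℕ) :=
      pow_le_pow_left₀ (by norm_num) (by nlinarith [Real.exp_one_gt_d9]) 9
    have h3 : Real.exp 1 ^ (9:ℕ) = Real.exp 9 := by
      rw [← Real.exp_nat_mul]; norm_num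
    nlinarith [h2, h3]
  have h4 : Real.log 3 = Real.log 6561 / 8 := by
    rw [show (6561:ℝ) = 3^(8:ℕ) by norm_num, Real.log_pow]; push_cast; ring
  rw [h4, div_lt_iff₀ (by norm_num : (0:ℝ) < 8)]
  have := (Real.log_lt_iff_lt_exp (by norm_num : (0:ℝ) < 6561)).mpr h1
  linarith

set_option maxHeartbeats 1000000 in
theorem stmt11 (q : ℝ) (hq0 : 0 ≤ q) (hq1 : q ≤ 1) :
    (0 ≤ -(1/4) * (1/4 : ℝ) ^ q + (1/4) * (3/4 : ℝ) ^ q + 1/8) ∧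
    (0 ≤ (1/4) * (1/2 : ℝ) ^ q - 1/8) ∧
    (0 ≤ (1/4) * (1/4 : ℝ) ^ q - (1/4) * (3/4 : ℝ) ^ q + 1/8) ∧
    (0 ≤ (1/2) * (1/4 : ℝ) ^ q - (3/4) * (1/2 : ℝ) ^ q + (1/2) * (3/4 : ℝ) ^ q - 1/8) ∧
    (q < 1 →
      (0 < -(1/4) * (1/4 : ℝ) ^ q + (1/4) * (3/4 : ℝ) ^ q + 1/8) ∧
      (0 < (1/4) * (1/2 : ℝ) ^ q - 1/8) ∧
      (0 < (1/4) * (1/4 : ℝ) ^ q - (1/4) * (3/4 : ℝ) ^ q + 1/8) ∧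
      (0 < (1/2) * (1/4 : ℝ) ^ q - (3/4) * (1/2 : ℝ) ^ q + (1/2) * (3/4 : ℝ) ^ q - 1/8)) := by
  have hL2a := Real.log_two_gt_d9
  have hL2b := Real.log_two_lt_d9
  have hL3a := log3_gt_one
  have hL3b := log3_lt
  -- α₁
  have h14le34 : (1/4 : ℝ) ^ q ≤ (3/4 : ℝ) ^ q :=
    Real.rpow_le_rpow (by norm_num) (by norm_num) hq0
  have hA1 : (0:ℝ) < -(1/4) * (1/4 : ℝ) ^ q + (1/4) * (3/4 : ℝ) ^ q + 1/8 := by nlinarith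
  -- α₂
  have hA2 : ∀ r : ℝ, r ≤ 1 → (1/2:ℝ) ≤ (1/2:ℝ)^r := by
    intro r hr
    calc (1/2:ℝ) = (1/2:ℝ)^(1:ℝ) := (Real.rpow_one _).symm
      _ ≤ (1/2:ℝ)^r := Real.rpow_le_rpow_of_exponent_ge (by norm_num) (by norm_num) hr
  have hA2s : q < 1 → (1/2:ℝ) < (1/2:ℝ)^q := by
    intro hlt
    calc (1/2:ℝ) = (1/2:ℝ)^(1:ℝ) := (Real.rpow_one _).symm
      _ < (1/2:ℝ)^q := Real.rpow_lt_rpow_of_exponent_gt (by norm_num) (by norm_num) hlt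
  -- F and G
  set F : ℝ → ℝ := fun r => 2 + (4:ℝ)^r - 2*(3:ℝ)^r with hFdef
  set G : ℝ → ℝ := fun r => 4 + 4*(3:ℝ)^r - 6*(2:ℝ)^r - (4:ℝ)^r with hGdef
  have hF : ∀ r : ℝ, HasDerivAt F ((4:ℝ)^r * Real.log 4 - 2*((3:ℝ)^r * Real.log 3)) r := by
    intro r
    have h := (((hasDerivAt_const r (2:ℝ)).add
      ((Real.hasStrictDerivAt_const_rpow (by norm_num : (0:ℝ) < 4) r).hasDerivAt)).sub
      (((Real.hasStrictDerivAt_const_rpow (by norm_num : (0:ℝ) < 3) r).hasDerivAt).const_mul 2))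
    refine h.congr_deriv ?_
    ring
  have hG : ∀ r : ℝ, HasDerivAt G
      (4*((3:ℝ)^r * Real.log 3) - 6*((2:ℝ)^r * Real.log 2) - (4:ℝ)^r * Real.log 4) r := by
    intro r
    have h := ((((hasDerivAt_const r (4:ℝ)).add
      (((Real.hasStrictDerivAt_const_rpow (by norm_num : (0:ℝ) < 3) r).hasDerivAt).const_mul 4)).sub
      (((Real.hasStrictDerivAt_const_rpow (by norm_num : (0:ℝ) < 2) r).hasDerivAt).const_mul 6)).sub
      ((Real.hasStrictDerivAt_const_rpow (by norm_num : (0:ℝ) < 4) r).hasDerivAt))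
    refine h.congr_deriv ?_
    ring
  have hlog4 : Real.log 4 = 2 * Real.log 2 := by
    rw [show (4:ℝ) = 2^(2:ℕ) by norm_num, Real.log_pow]; push_cast; ring
  -- derivative of F is negative on [0,1]
  have hFderiv : ∀ r : ℝ, 0 ≤ r → r ≤ 1 →
      (4:ℝ)^r * Real.log 4 - 2*((3:ℝ)^r * Real.log 3) < 0 := by
    intro r hr0 hr1
    have h3pos : (0:ℝ) < (3:ℝ)^r := Real.rpow_pos_of_pos (by norm_num) r
    have he : (4:ℝ)^r = (4/3:ℝ)^r * (3:ℝ)^r := by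
      rw [← Real.mul_rpow (by norm_num) (by norm_num)]; norm_num
    have h43 : ((4:ℝ)/3)^r ≤ 4/3 := by
      calc ((4:ℝ)/3)^r ≤ ((4:ℝ)/3)^(1:ℝ) :=
            Real.rpow_le_rpow_of_exponent_le (by norm_num) hr1
        _ = 4/3 := Real.rpow_one _
    have h4r : (4:ℝ)^r ≤ (4/3) * (3:ℝ)^r := by
      rw [he]; exact mul_le_mul_of_nonneg_right h43 h3pos.le
    have hlog4pos : (0:ℝ) < Real.log 4 := by rw [hlog4]; linarith
    nlinarith [mul_le_mul_of_nonneg_right h4r hlog4pos.le, mul_pos h3pos hlog4pos,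
      mul_pos h3pos (by linarith : (0:ℝ) < Real.log 3)]
  -- derivative of G is negative on (0,1]
  have hGderiv : ∀ r : ℝ, 0 ≤ r → r ≤ 1 →
      4*((3:ℝ)^r * Real.log 3) - 6*((2:ℝ)^r * Real.log 2) - (4:ℝ)^r * Real.log 4 < 0 := by
    intro r hr0 hr1
    set L2 := Real.log 2
    set L3 := Real.log 3
    have h2pos : (0:ℝ) < (2:ℝ)^r := Real.rpow_pos_of_pos (by norm_num) r
    have he3 : (3:ℝ)^r = (3/2:ℝ)^r * (2:ℝ)^r := by
      rw [← Real.mul_rpow (by norm_num) (by norm_num)]; norm_num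
    have he4 : (4:ℝ)^r = (2:ℝ)^r * (2:ℝ)^r := by
      rw [← Real.mul_rpow (by norm_num) (by norm_num)]; norm_num
    have h32 : ((3:ℝ)/2)^r ≤ 1 + r * (1/2) := by
      have := rpow_one_add_le_one_add_mul_self (by norm_num : (-1:ℝ) ≤ 1/2) hr0 hr1
      norm_num at this ⊢
      convert this using 2
    have h3r : (3:ℝ)^r ≤ (1 + r/2) * (2:ℝ)^r := by
      rw [he3]
      have : ((3:ℝ)/2)^r ≤ 1 + r/2 := by linarith
      exact mul_le_mul_of_nonneg_right this h2pos.le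
    have h2low : 1 + r*L2 + (r*L2)^2/2 ≤ (2:ℝ)^r := by
      have : (2:ℝ)^r = Real.exp (L2 * r) := Real.rpow_def_of_pos (by norm_num) r
      rw [this]
      have hx : (0:ℝ) ≤ L2 * r := mul_nonneg (by linarith) hr0
      have hq2 := Real.quadratic_le_exp_of_nonneg hx
      nlinarith [hq2]
    -- key scalar inequality
    have hkey : 4*L3 + 2*L3*r < 8*L2 + 2*L2^2*r + L2^3*r^2 := by
      have hL2a' : (0.6931:ℝ) < L2 := by linarith
      have e2 : (0.48038:ℝ) < L2^2 := by nlinarith [hL2a']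
      have e3 : (0.3329:ℝ) < L2^3 := by nlinarith [e2, hL2a']
      have c2 : 2*(0.48038:ℝ)*r ≤ 2*L2^2*r := by nlinarith [e2, hr0]
      have c3 : (0.3329:ℝ)*r^2 ≤ L2^3*r^2 := by nlinarith [e3, sq_nonneg r]
      have c4 : 4*L3 + 2*L3*r < 4.5 + 2.25*r := by nlinarith [hL3b, hL3a, hr0]
      nlinarith [sq_nonneg (1-r), sub_nonneg.2 hr1, c2, c3, c4, hL2a']
    have hL2pos : (0:ℝ) < L2 := by linarith
    have hL3pos : (0:ℝ) < L3 := by linarith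
    set t := (2:ℝ)^r with ht
    have inner : 4*L3*(1 + r/2) - 6*L2 - 2*L2*t < 0 := by
      have h1 : 2*L2*(1 + r*L2 + (r*L2)^2/2) ≤ 2*L2*t :=
        mul_le_mul_of_nonneg_left h2low (by linarith)
      nlinarith [h1, hkey]
    have hmul : t * (4*L3*(1 + r/2) - 6*L2 - 2*L2*t) < 0 :=
      mul_neg_of_pos_of_neg h2pos inner
    have hstep : 4*((3:ℝ)^r * L3) ≤ 4*L3*((1 + r/2)*t) := by
      nlinarith [mul_le_mul_of_nonneg_left h3r (by linarith : (0:ℝ) ≤ 4*L3)]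
    rw [he4, hlog4]
    nlinarith [hstep, hmul]
  -- continuity
  have hFcont : ContinuousOn F (Set.Icc (0:ℝ) 1) :=
    fun x _ => (hF x).continuousAt.continuousWithinAt
  have hGcont : ContinuousOn G (Set.Icc (0:ℝ) 1) :=
    fun x _ => (hG x).continuousAt.continuousWithinAt
  have hFanti : StrictAntiOn F (Set.Icc (0:ℝ) 1) := by
    apply strictAntiOn_of_deriv_neg (convex_Icc 0 1) hFcont
    intro x hx
    rw [interior_Icc] at hx
    rw [(hF x).deriv]
    exact hFderiv x hx.1.le hx.2.le
  have hGanti : StrictAntiOn G (Set.Icc (0:ℝ) 1) := by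
    apply strictAntiOn_of_deriv_neg (convex_Icc 0 1) hGcont
    intro x hx
    rw [interior_Icc] at hx
    rw [(hG x).deriv]
    exact hGderiv x hx.1.le hx.2.le
  have hF1 : F 1 = 0 := by simp only [hFdef, Real.rpow_one]; norm_num
  have hG1 : G 1 = 0 := by simp only [hGdef, Real.rpow_one]; norm_num
  have hFnn : 0 ≤ F q := by
    rcases eq_or_lt_of_le hq1 with h | h
    · rw [h, hF1]
    · have := hFanti ⟨hq0, hq1⟩ (Set.mem_Icc.mpr ⟨zero_le_one, le_refl 1⟩) h
      rw [hF1] at this; linarith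
  have hGnn : 0 ≤ G q := by
    rcases eq_or_lt_of_le hq1 with h | h
    · rw [h, hG1]
    · have := hGanti ⟨hq0, hq1⟩ (Set.mem_Icc.mpr ⟨zero_le_one, le_refl 1⟩) h
      rw [hG1] at this; linarith
  have hFpos : q < 1 → 0 < F q := by
    intro h
    have := hFanti ⟨hq0, hq1⟩ (Set.mem_Icc.mpr ⟨zero_le_one, le_refl 1⟩) h
    rw [hF1] at this; linarith
  have hGpos : q < 1 → 0 < G q := by
    intro h
    have := hGanti ⟨hq0, hq1⟩ (Set.mem_Icc.mpr ⟨zero_le_one, le_refl 1⟩) h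
    rw [hG1] at this; linarith
  -- translate back
  have hP : (0:ℝ) < (4:ℝ)^q := Real.rpow_pos_of_pos (by norm_num) q
  have e1 : (1/4:ℝ)^q * (4:ℝ)^q = 1 := by
    rw [← Real.mul_rpow (by norm_num) (by norm_num)]; norm_num
  have e2 : (3/4:ℝ)^q * (4:ℝ)^q = (3:ℝ)^q := by
    rw [← Real.mul_rpow (by norm_num) (by norm_num)]; norm_num
  have e3 : (1/2:ℝ)^q * (4:ℝ)^q = (2:ℝ)^q := by
    rw [← Real.mul_rpow (by norm_num) (by norm_num)]; norm_num
  have hA3eq : ((1/4) * (1/4 : ℝ) ^ q - (1/4) * (3/4 : ℝ) ^ q + 1/8) * (8 * (4:ℝ)^q) = F q := by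
    simp only [hFdef]
    linear_combination 2*e1 - 2*e2
  have hA4eq : ((1/2) * (1/4 : ℝ) ^ q - (3/4) * (1/2 : ℝ) ^ q + (1/2) * (3/4 : ℝ) ^ q - 1/8)
      * (8 * (4:ℝ)^q) = G q := by
    simp only [hGdef]
    linear_combination 4*e1 + 4*e2 - 6*e3
  have h8P : (0:ℝ) < 8 * (4:ℝ)^q := by positivity
  have keynn : ∀ a b c : ℝ, a * b = c → 0 < b → 0 ≤ c → 0 ≤ a := by
    intro a b c habc hb hc
    by_contra h
    push_neg at h
    nlinarith [mul_neg_of_neg_of_pos h hb]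
  have keypos : ∀ a b c : ℝ, a * b = c → 0 < b → 0 < c → 0 < a := by
    intro a b c habc hb hc
    exact (mul_pos_iff_of_pos_right hb).mp (habc.symm ▸ hc)
  refine ⟨hA1.le, by nlinarith [hA2 q hq1], ?_, ?_, fun hlt => ⟨hA1, by nlinarith [hA2s hlt], ?_, ?_⟩⟩
  · exact keynn _ _ _ hA3eq h8P hFnn
  · exact keynn _ _ _ hA4eq h8P hGnn
  · exact keypos _ _ _ hA3eq h8P (hFpos hlt)
  · exact keypos _ _ _ hA4eq h8P (hGpos hlt)
end
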